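/- Let T be a tree (a connected acyclic simple graph) with vertex set X, let l : X → [0,∞) be a labeling, and let d_l be defined by d_l(u,v) = 0 if u = v and d_l(u,v) = max{l(w) : w a vertex of the unique path in T joining u and v} if u ≠ v. Then d_l is an ultrametric on X (i.e., a metric satisfying the strong triangle inequality) if and only if max{l(u), l(v)} > 0 holds for every edge {u,v} of T. -/

import Mathlib

/-- `d` is an ultrametric on `X`: a nonnegative, symmetric function vanishing
exactly on the diagonal and satisfying the strong triangle inequality. -/
def IsUltrametricOn {X : Type*} (d : X → X → ℝ) : Prop :=
  (∀ x y, 0 ≤ d x y) ∧ (∀ x y, d x y = d y x) ∧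
  (∀ x y, d x y = 0 ↔ x = y) ∧
  (∀ x y z, d x y ≤ max (d x z) (d z y))

/-- `B` is an open ball of the space `(X, d)`. -/
def IsOpenBallOf {X : Type*} (d : X → X → ℝ) (B : Set X) : Prop :=
  ∃ c : X, ∃ r : ℝ, 0 < r ∧ B = {x | d c x < r}

/-- `C` is a centered sphere of the space `(X, d)`. -/
def IsCenteredSphereOf {X : Type*} (d : X → X → ℝ) (C : Set X) : Prop :=
  ∃ c ∈ C, ∃ r : ℝ, 0 ≤ r ∧ C = {x | d x c = r} ∪ {c}

/-- The diameter `sup {d x y : x, y ∈ A}` of a subset `A` of `(X, d)`. -/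
noncomputable def setDiam {X : Type*} (d : X → X → ℝ) (A : Set X) : ℝ :=
  sSup {r | ∃ x ∈ A, ∃ y ∈ A, r = d x y}

/-- A space is locally finite if all of its open balls are finite sets. -/
def IsLocallyFiniteOn {X : Type*} (d : X → X → ℝ) : Prop :=
  ∀ B : Set X, IsOpenBallOf d B → B.Finite

/-- The maximum of the (nonnegative) labels of the vertices of a walk `p`. -/
def walkMax {X : Type*} {T : SimpleGraph X} (l : X → ℝ) {u v : X} (p : T.Walk u v) : ℝ :=
  (p.support.map l).foldr max 0

/-- The function `d` is generated by the tree `T` with nonnegative vertex labeling `l`,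
i.e. `d u u = 0` and, for `u ≠ v`, `d u v` is the maximum of the labels of the vertices
on the (unique) path joining `u` and `v` in `T`. -/
def GeneratedBy {X : Type*} (d : X → X → ℝ) (T : SimpleGraph X) (l : X → ℝ) : Prop :=
  T.IsTree ∧ (∀ x, 0 ≤ l x) ∧ (∀ u, d u u = 0) ∧
  ∀ u v : X, u ≠ v → ∀ p : T.Walk u v, p.IsPath → d u v = walkMax l p

/-- `(X, d)` belongs to the class UGVL: it is generated by some labeled tree. -/
def IsUGVL {X : Type*} (d : X → X → ℝ) : Prop :=
  ∃ (T : SimpleGraph X) (l : X → ℝ), GeneratedBy d T l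


lemma foldr_max_nonneg (L : List ℝ) : 0 ≤ L.foldr max 0 := by
  induction L with
  | nil => simp
  | cons a L ih => exact le_max_of_le_right ih

lemma le_foldr_max {L : List ℝ} {a : ℝ} (h : a ∈ L) : a ≤ L.foldr max 0 := by
  induction L with
  | nil => simp at h
  | cons b L ih =>
    rcases List.mem_cons.mp h with rfl | h
    · exact le_max_left _ _
    · exact le_trans (ih h) (le_max_right _ _)

lemma foldr_max_le {L : List ℝ} {b : ℝ} (hb : 0 ≤ b) (h : ∀ a ∈ L, a ≤ b) :
    L.foldr max 0 ≤ b := by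
  induction L with
  | nil => simpa
  | cons a L ih =>
    simp only [List.foldr_cons, max_le_iff]
    exact ⟨h a (by simp), ih (fun a ha => h a (by simp [ha]))⟩

lemma walkMax_nonneg {X : Type*} {T : SimpleGraph X} (l : X → ℝ) {u v : X}
    (p : T.Walk u v) : 0 ≤ walkMax l p := foldr_max_nonneg _

lemma le_walkMax {X : Type*} {T : SimpleGraph X} (l : X → ℝ) {u v w : X}
    {p : T.Walk u v} (h : w ∈ p.support) : l w ≤ walkMax l p :=
  le_foldr_max (List.mem_map_of_mem h)

lemma walkMax_le {X : Type*} {T : SimpleGraph X} (l : X → ℝ) {u v : X}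
    {p : T.Walk u v} {b : ℝ} (hb : 0 ≤ b) (h : ∀ w ∈ p.support, l w ≤ b) :
    walkMax l p ≤ b := by
  refine foldr_max_le hb ?_
  intro a ha
  obtain ⟨w, hw, rfl⟩ := List.mem_map.mp ha
  exact h w hw

lemma walkMax_mono {X : Type*} {T : SimpleGraph X} (l : X → ℝ) {u v u' v' : X}
    {p : T.Walk u v} {q : T.Walk u' v'} (h : ∀ w ∈ p.support, w ∈ q.support) :
    walkMax l p ≤ walkMax l q :=
  walkMax_le l (walkMax_nonneg l q) (fun w hw => le_walkMax l (h w hw))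

/-- Let `T` be a tree with vertex set `X`, `l : X → [0,∞)` a labeling, and let `d`
satisfy `d u u = 0` and `d u v = max{l w : w on the path joining u and v}` for `u ≠ v`
(i.e. `d = d_l`). Then `d_l` is an ultrametric on `X` iff `max{l u, l v} > 0` for
every edge `{u, v}` of `T`. -/
theorem stmt_0 {X : Type*} (T : SimpleGraph X) (hT : T.IsTree)
    (l : X → ℝ) (hl : ∀ x, 0 ≤ l x) (d : X → X → ℝ)
    (hd0 : ∀ u, d u u = 0)
    (hd : ∀ u v : X, u ≠ v → ∀ p : T.Walk u v, p.IsPath → d u v = walkMax l p) :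
    IsUltrametricOn d ↔ ∀ u v : X, T.Adj u v → 0 < max (l u) (l v) := by

  classical
  constructor
  · rintro ⟨hnn, hsym, hzero, htri⟩ u v huv
    have hne : u ≠ v := huv.ne
    have hp : (SimpleGraph.Walk.cons huv SimpleGraph.Walk.nil).IsPath := by
      simp [hne]
    have heq := hd u v hne _ hp
    have hpos : 0 < d u v :=
      lt_of_le_of_ne (hnn u v) (fun h => hne ((hzero u v).mp h.symm))
    rw [heq] at hpos
    have hwm : walkMax l (SimpleGraph.Walk.cons huv SimpleGraph.Walk.nil)
        = max (l u) (l v) := by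
      simp [walkMax, max_eq_left (hl v)]
    rwa [hwm] at hpos
  · intro hedge
    have hpath : ∀ x y : X, ∃ p : T.Walk x y, p.IsPath :=
      fun x y => ⟨((hT.isConnected.preconnected x y).some).bypass,
        SimpleGraph.Walk.bypass_isPath _⟩
    have key : ∀ (x y : X) (p : T.Walk x y), x ≠ y → 0 < walkMax l p := by
      intro x y p hne
      cases p with
      | nil => exact absurd rfl hne
      | cons h q =>
        rename_i b
        have h1 : l x ≤ walkMax l (SimpleGraph.Walk.cons h q) :=
          le_walkMax l (SimpleGraph.Walk.start_mem_support _)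
        have h2 : l b ≤ walkMax l (SimpleGraph.Walk.cons h q) := by
          refine le_walkMax l ?_
          rw [SimpleGraph.Walk.support_cons]
          exact List.mem_cons_of_mem _ (SimpleGraph.Walk.start_mem_support q)
        exact lt_of_lt_of_le (hedge x b h) (max_le h1 h2)
    have hnn : ∀ x y, 0 ≤ d x y := by
      intro x y
      by_cases hxy : x = y
      · subst hxy; rw [hd0]
      · obtain ⟨p, hp⟩ := hpath x y
        rw [hd x y hxy p hp]
        exact walkMax_nonneg l p
    refine ⟨hnn, ?_, ?_, ?_⟩
    · intro x y
      by_cases hxy : x = y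
      · subst hxy; rfl
      · obtain ⟨p, hp⟩ := hpath x y
        rw [hd x y hxy p hp, hd y x (Ne.symm hxy) p.reverse hp.reverse]
        refine le_antisymm (walkMax_mono l ?_) (walkMax_mono l ?_) <;>
          intro w hw <;> simpa [SimpleGraph.Walk.support_reverse] using hw
    · intro x y
      constructor
      · intro h
        by_contra hxy
        obtain ⟨p, hp⟩ := hpath x y
        rw [hd x y hxy p hp] at h
        exact absurd h (ne_of_gt (key x y p hxy))
      · rintro rfl; exact hd0 x
    · intro x y z
      by_cases hxy : x = y
      · subst hxy
        rw [hd0]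
        exact le_max_of_le_left (hnn x z)
      by_cases hxz : x = z
      · subst hxz
        rw [hd0]
        exact le_max_right _ _
      by_cases hzy : z = y
      · subst hzy
        rw [hd0]
        exact le_max_left _ _
      obtain ⟨p, hp⟩ := hpath x z
      obtain ⟨q, hq⟩ := hpath z y
      have hr : (p.append q).bypass.IsPath := SimpleGraph.Walk.bypass_isPath _
      rw [hd x y hxy _ hr, hd x z hxz p hp, hd z y hzy q hq]
      refine walkMax_le l (le_max_of_le_left (walkMax_nonneg l p)) ?_
      intro w hw
      have hw' : w ∈ (p.append q).support :=
        SimpleGraph.Walk.support_bypass_subset _ hw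
      rw [SimpleGraph.Walk.mem_support_append_iff] at hw'
      rcases hw' with hw' | hw'
      · exact le_max_of_le_left (le_walkMax l hw')
      · exact le_max_of_le_right (le_walkMax l hw')
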